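/- arXiv:2408.15981 — 4 statements merged into one kernel-verified Lean document; each statement's English description precedes it below -/
import Mathlib

section
/- Let p_τ(x,y) be a transition density on X ⊆ ℝ^D with prior density ρ₀ and marginal ρ₁(y) = ∫ ρ₀(x) p_τ(x,y) dx, and define the backward transition density p_{-τ}(y,x) = ρ₀(x) p_τ(x,y) / ρ₁(y). If there exist functions p_τ^D : X × Z → ℝ⁺ and p_local : Z × X → ℝ⁺ such that p_τ(x,y) = p_τ^D(x, r(y)) · p_local(r(y), y) for all x,y (decomposability), then there exists a function p_{-τ}^D : Z × X → ℝ⁺ such that p_{-τ}(y,x) = p_{-τ}^D(r(y), x) for all x,y. -/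
open MeasureTheory

/-- Decomposability implies the backward transition density factors
through the reaction coordinate. -/
theorem decomposability_implies_backward_factorization
    {D d : ℕ}
    (X : Set (EuclideanSpace ℝ (Fin D))) (hX : MeasurableSet X)
    (r : EuclideanSpace ℝ (Fin D) → EuclideanSpace ℝ (Fin d)) (hr : Measurable r)
    (pτ : EuclideanSpace ℝ (Fin D) → EuclideanSpace ℝ (Fin D) → ℝ)
    (hpτ_nonneg : ∀ x ∈ X, ∀ y ∈ X, 0 ≤ pτ x y)
    (hpτ_norm : ∀ x ∈ X, ∫ y in X, pτ x y = 1)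
    (ρ₀ : EuclideanSpace ℝ (Fin D) → ℝ)
    (hρ₀_pos : ∀ x ∈ X, 0 < ρ₀ x)
    (hρ₀_norm : ∫ x in X, ρ₀ x = 1)
    (ρ₁ : EuclideanSpace ℝ (Fin D) → ℝ)
    (hρ₁_def : ∀ y ∈ X, ρ₁ y = ∫ x in X, ρ₀ x * pτ x y)
    (hρ₁_pos : ∀ y ∈ X, 0 < ρ₁ y)
    (pmτ : EuclideanSpace ℝ (Fin D) → EuclideanSpace ℝ (Fin D) → ℝ)
    (hpmτ_def : ∀ x ∈ X, ∀ y ∈ X, pmτ y x = ρ₀ x * pτ x y / ρ₁ y)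
    -- decomposability
    (pτD : EuclideanSpace ℝ (Fin D) → EuclideanSpace ℝ (Fin d) → ℝ)
    (plocal : EuclideanSpace ℝ (Fin d) → EuclideanSpace ℝ (Fin D) → ℝ)
    (hpτD_nonneg : ∀ x z, 0 ≤ pτD x z)
    (hplocal_nonneg : ∀ z y, 0 ≤ plocal z y)
    (hdecomp : ∀ x ∈ X, ∀ y ∈ X, pτ x y = pτD x (r y) * plocal (r y) y) :
    ∃ pmτD : EuclideanSpace ℝ (Fin d) → EuclideanSpace ℝ (Fin D) → ℝ,
      (∀ z x, 0 ≤ pmτD z x) ∧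
      ∀ x ∈ X, ∀ y ∈ X, pmτ y x = pmτD (r y) x := by
  refine ⟨fun z x => max 0 (ρ₀ x * pτD x z / ∫ x in X, ρ₀ x * pτD x z),
    fun z x => le_max_left _ _, fun x hx y hy => ?_⟩
  set I : ℝ := ∫ x in X, ρ₀ x * pτD x (r y) with hI
  have hρ₁ : ρ₁ y = I * plocal (r y) y := by
    rw [hρ₁_def y hy, hI, ← MeasureTheory.integral_mul_const]
    refine MeasureTheory.setIntegral_congr_fun hX (fun x' hx' => ?_)
    simp only [hdecomp x' hx' y hy, mul_assoc]
  have hpl_pos : 0 < plocal (r y) y := by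
    rcases (hplocal_nonneg (r y) y).lt_or_eq with h | h
    · exact h
    · exfalso
      have := hρ₁_pos y hy
      rw [hρ₁, ← h, mul_zero] at this
      exact lt_irrefl _ this
  have hI_pos : 0 < I := by
    have h := hρ₁_pos y hy
    rw [hρ₁] at h
    nlinarith
  have : pmτ y x = ρ₀ x * pτD x (r y) / I := by
    rw [hpmτ_def x hx y hy, hdecomp x hx y hy, hρ₁]
    field_simp
  rw [this]
  exact (max_eq_right (div_nonneg (mul_nonneg (hρ₀_pos x hx).le (hpτD_nonneg x _)) hI_pos.le)).symm
end

section
/- With the same setup, the converse holds: if there exists p_{-τ}^D : Z × X → ℝ⁺ with p_{-τ}(y,x) = p_{-τ}^D(r(y), x) for all x,y, then p_τ(x,y) factors as p_τ(x,y) = p_τ^D(x, r(y)) · ρ₁(y) for some function p_τ^D : X × Z → ℝ⁺ with an appropriate normalization, i.e., the system is decomposable with respect to r. -/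
open MeasureTheory

/-- If the backward transition density factors through the reaction
coordinate, then the forward transition density decomposes as
`pτ x y = pτD x (r y) * ρ₁ y`, i.e. the system is decomposable with respect to `r`. -/
theorem backward_factorization_implies_decomposability
    {D d : ℕ}
    (X : Set (EuclideanSpace ℝ (Fin D))) (hX : MeasurableSet X)
    (r : EuclideanSpace ℝ (Fin D) → EuclideanSpace ℝ (Fin d)) (hr : Measurable r)
    (pτ : EuclideanSpace ℝ (Fin D) → EuclideanSpace ℝ (Fin D) → ℝ)
    (hpτ_nonneg : ∀ x ∈ X, ∀ y ∈ X, 0 ≤ pτ x y)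
    (hpτ_norm : ∀ x ∈ X, ∫ y in X, pτ x y = 1)
    (ρ₀ : EuclideanSpace ℝ (Fin D) → ℝ)
    (hρ₀_pos : ∀ x ∈ X, 0 < ρ₀ x)
    (hρ₀_norm : ∫ x in X, ρ₀ x = 1)
    (ρ₁ : EuclideanSpace ℝ (Fin D) → ℝ)
    (hρ₁_def : ∀ y ∈ X, ρ₁ y = ∫ x in X, ρ₀ x * pτ x y)
    (hρ₁_pos : ∀ y ∈ X, 0 < ρ₁ y)
    (pmτ : EuclideanSpace ℝ (Fin D) → EuclideanSpace ℝ (Fin D) → ℝ)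
    (hpmτ_def : ∀ x ∈ X, ∀ y ∈ X, pmτ y x = ρ₀ x * pτ x y / ρ₁ y)
    -- the backward density factors through the reaction coordinate
    (pmτD : EuclideanSpace ℝ (Fin d) → EuclideanSpace ℝ (Fin D) → ℝ)
    (hpmτD_nonneg : ∀ z x, 0 ≤ pmτD z x)
    (hfact : ∀ x ∈ X, ∀ y ∈ X, pmτ y x = pmτD (r y) x) :
    ∃ pτD : EuclideanSpace ℝ (Fin D) → EuclideanSpace ℝ (Fin d) → ℝ,
      (∀ x z, 0 ≤ pτD x z) ∧
      ∀ x ∈ X, ∀ y ∈ X, pτ x y = pτD x (r y) * ρ₁ y := by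
  refine ⟨fun x z => max 0 (pmτD z x / ρ₀ x), fun x z => le_max_left _ _, ?_⟩
  intro x hx y hy
  have h0 : ρ₀ x ≠ 0 := (hρ₀_pos x hx).ne'
  have h1 : ρ₁ y ≠ 0 := (hρ₁_pos y hy).ne'
  have hq : pmτD (r y) x / ρ₀ x = pτ x y / ρ₁ y := by
    rw [← hfact x hx y hy, hpmτ_def x hx y hy]
    field_simp
  beta_reduce
  rw [max_eq_right, hq]
  · field_simp
  · rw [hq]
    exact div_nonneg (hpτ_nonneg x hx y hy) (hρ₁_pos y hy).le
end

section
/- Assume the Markov process with transition density p_τ has a stationary density π (so π(y) = ∫ π(x) p_τ(x,y) dx). If p_τ(x,y) = p_τ^D(x, r(y)) · p_local(r(y), y) for all x,y, then p_τ(x,y) = \tilde{p}_τ^D(x, r(y)) · π(y), where \tilde{p}_τ^D(x, z) = p_τ^D(x,z) / ∫ π(x') p_τ^D(x', z) dx'. That is, the two formulations of decomposability are equivalent in the presence of a stationary distribution. -/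
open MeasureTheory

/-- In the presence of a stationary density, the two formulations of
decomposability are equivalent: `pτ x y = pτD x (r y) * plocal (r y) y` implies
`pτ x y = (pτD x (r y) / ∫ x', π x' * pτD x' (r y)) * π y`. -/
theorem decomposability_stationary_equivalence
    {D d : ℕ}
    (X : Set (EuclideanSpace ℝ (Fin D))) (hX : MeasurableSet X)
    (r : EuclideanSpace ℝ (Fin D) → EuclideanSpace ℝ (Fin d)) (hr : Measurable r)
    (pτ : EuclideanSpace ℝ (Fin D) → EuclideanSpace ℝ (Fin D) → ℝ)
    (hpτ_nonneg : ∀ x ∈ X, ∀ y ∈ X, 0 ≤ pτ x y)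
    (hpτ_norm : ∀ x ∈ X, ∫ y in X, pτ x y = 1)
    -- stationary probability density
    (π : EuclideanSpace ℝ (Fin D) → ℝ)
    (hπ_pos : ∀ x ∈ X, 0 < π x)
    (hπ_norm : ∫ x in X, π x = 1)
    (hπ_stat : ∀ y ∈ X, π y = ∫ x in X, π x * pτ x y)
    -- decomposability
    (pτD : EuclideanSpace ℝ (Fin D) → EuclideanSpace ℝ (Fin d) → ℝ)
    (plocal : EuclideanSpace ℝ (Fin d) → EuclideanSpace ℝ (Fin D) → ℝ)
    (hpτD_nonneg : ∀ x z, 0 ≤ pτD x z)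
    (hplocal_nonneg : ∀ z y, 0 ≤ plocal z y)
    (hdecomp : ∀ x ∈ X, ∀ y ∈ X, pτ x y = pτD x (r y) * plocal (r y) y)
    -- the normalizing integral is finite and strictly positive on the range of r
    (hint : ∀ y ∈ X, IntegrableOn (fun x' => π x' * pτD x' (r y)) X)
    (hpos : ∀ y ∈ X, 0 < ∫ x' in X, π x' * pτD x' (r y)) :
    ∀ x ∈ X, ∀ y ∈ X,
      pτ x y = (pτD x (r y) / ∫ x' in X, π x' * pτD x' (r y)) * π y := by
  intro x hx y hy
  set I := ∫ x' in X, π x' * pτD x' (r y) with hI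
  have hstep : π y = I * plocal (r y) y := by
    rw [hπ_stat y hy]
    have : ∀ x' ∈ X, π x' * pτ x' y = (π x' * pτD x' (r y)) * plocal (r y) y := by
      intro x' hx'
      rw [hdecomp x' hx' y hy]; ring
    rw [setIntegral_congr_fun hX this, integral_mul_const]
  have hIne : I ≠ 0 := ne_of_gt (hpos y hy)
  have hpl : plocal (r y) y = π y / I := by
    rw [eq_div_iff hIne, hstep]; ring
  rw [hdecomp x hx y hy, hpl]
  field_simp
end

section
/- Let (X, Y) be a pair of random variables with joint density ρ(x,y) = ρ₀(x) p_τ(x,y), and define the Koopman operator K_τ f(x) = E[f(Y) | X = x] and the reduced Koopman operator K_L f(x) = E[f(Y) | r(X) = r(x)]. Then K_L = K_τ (as operators on bounded measurable functions, equality ρ₀-almost everywhere) if and only if lumpability holds, i.e., p_τ(x,·) depends on x only through r(x) (for ρ₀-a.e. x). -/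
open MeasureTheory ProbabilityTheory
open scoped NNReal ENNReal

lemma aux_integrable_of_bdd {α : Type*} [MeasurableSpace α] {μ : Measure α} [IsFiniteMeasure μ]
    {f : α → ℝ} {C : ℝ} (hf : AEStronglyMeasurable f μ) (hC : ∀ y, |f y| ≤ C) :
    Integrable f μ :=
  Integrable.mono' (integrable_const C) hf (Filter.Eventually.of_forall fun x => by
    simpa using hC x)

/-- The reduced Koopman operator agrees with the full Koopman operator
(`E[f(Y)|X] = E[f(Y)|r(X)]` a.e., for all bounded measurable `f`) if and only if
lumpability holds, i.e. `pτ(x,·)` depends on `x` only through `r x`,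
`(ρ₀ ⊗ λ)`-almost everywhere. -/
theorem reduced_koopman_eq_iff_lumpable
    {D d : ℕ}
    {Ω : Type*} [MeasurableSpace Ω] (μ : Measure Ω) [IsProbabilityMeasure μ]
    (Xv Yv : Ω → EuclideanSpace ℝ (Fin D))
    (hXv : Measurable Xv) (hYv : Measurable Yv)
    (r : EuclideanSpace ℝ (Fin D) → EuclideanSpace ℝ (Fin d)) (hr : Measurable r)
    (pτ : EuclideanSpace ℝ (Fin D) → EuclideanSpace ℝ (Fin D) → ℝ)
    (hpτ_meas : Measurable (Function.uncurry pτ))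
    (hpτ_nonneg : ∀ x y, 0 ≤ pτ x y)
    (hpτ_norm : ∀ x, ∫ y, pτ x y = 1)
    (ρ₀ : EuclideanSpace ℝ (Fin D) → ℝ)
    (hρ₀_meas : Measurable ρ₀)
    (hρ₀_pos : ∀ x, 0 < ρ₀ x)
    (hρ₀_norm : ∫ x, ρ₀ x = 1)
    -- the joint law of (X, Y) has density ρ(x,y) = ρ₀(x) pτ(x,y)
    (hlaw : Measure.map (fun ω => (Xv ω, Yv ω)) μ =
      (volume : Measure (EuclideanSpace ℝ (Fin D) × EuclideanSpace ℝ (Fin D))).withDensity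
        (fun p => ENNReal.ofReal (ρ₀ p.1 * pτ p.1 p.2))) :
    (∀ f : EuclideanSpace ℝ (Fin D) → ℝ, Measurable f → (∃ C, ∀ y, |f y| ≤ C) →
        μ[(fun ω => f (Yv ω)) | MeasurableSpace.comap Xv inferInstance]
          =ᵐ[μ] μ[(fun ω => f (Yv ω)) | MeasurableSpace.comap (fun ω => r (Xv ω)) inferInstance])
      ↔
    (∃ pτL : EuclideanSpace ℝ (Fin d) → EuclideanSpace ℝ (Fin D) → ℝ,
      Measurable (Function.uncurry pτL) ∧ (∀ z y, 0 ≤ pτL z y) ∧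
      ∀ᵐ p ∂((volume : Measure (EuclideanSpace ℝ (Fin D) × EuclideanSpace ℝ (Fin D))).withDensity
          (fun p => ENNReal.ofReal (ρ₀ p.1))),
        pτ p.1 p.2 = pτL (r p.1) p.2) := by
  classical
  have hXY : Measurable fun ω => (Xv ω, Yv ω) := hXv.prodMk hYv
  have hrX : Measurable fun ω => r (Xv ω) := hr.comp hXv
  have hpτx_meas : ∀ x, Measurable (pτ x) := fun x =>
    hpτ_meas.comp measurable_prodMk_left
  have hpτx_int : ∀ x, Integrable (pτ x) := by
    intro x
    by_contra h
    have := hpτ_norm x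
    rw [integral_undef h] at this
    norm_num at this
  have hlint : ∀ x, ∫⁻ y, ENNReal.ofReal (pτ x y) = 1 := by
    intro x
    rw [← ofReal_integral_eq_lintegral_ofReal (hpτx_int x)
      (Filter.Eventually.of_forall fun y => hpτ_nonneg x y), hpτ_norm x]
    simp
  have hpτ_meas' : Measurable fun p : (EuclideanSpace ℝ (Fin D)) × (EuclideanSpace ℝ (Fin D)) =>
      pτ p.1 p.2 := by
    have h : (fun p : (EuclideanSpace ℝ (Fin D)) × (EuclideanSpace ℝ (Fin D)) => pτ p.1 p.2)
        = Function.uncurry pτ := by ext ⟨x, y⟩; rfl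
    rw [h]; exact hpτ_meas
  have hρπ_meas : Measurable fun p : (EuclideanSpace ℝ (Fin D)) × (EuclideanSpace ℝ (Fin D)) =>
      ENNReal.ofReal (ρ₀ p.1 * pτ p.1 p.2) :=
    ((hρ₀_meas.comp measurable_fst).mul hpτ_meas').ennreal_ofReal
  have huncurry_ofReal : Measurable
      (Function.uncurry fun x y => ENNReal.ofReal (pτ x y)) := by
    have : Function.uncurry (fun x y => ENNReal.ofReal (pτ x y))
        = fun p => ENNReal.ofReal (Function.uncurry pτ p) := by
      ext ⟨x, y⟩; rfl
    rw [this]; exact hpτ_meas.ennreal_ofReal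
  -- the kernel x ↦ pτ(x, ·) λ
  set Kτ : Kernel (EuclideanSpace ℝ (Fin D)) (EuclideanSpace ℝ (Fin D)) :=
    Kernel.withDensity (Kernel.const _ (volume : Measure (EuclideanSpace ℝ (Fin D))))
      (fun x y => ENNReal.ofReal (pτ x y)) with hKτ
  have hKτ_apply : ∀ x, Kτ x = (volume : Measure (EuclideanSpace ℝ (Fin D))).withDensity
      (fun y => ENNReal.ofReal (pτ x y)) := by
    intro x
    rw [hKτ, Kernel.withDensity_apply _ huncurry_ofReal, Kernel.const_apply]
  haveI : IsMarkovKernel Kτ := by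
    constructor
    intro x
    constructor
    rw [hKτ_apply x, withDensity_apply _ MeasurableSet.univ, Measure.restrict_univ, hlint x]
  -- law of X
  have hlawX : μ.map Xv = (volume : Measure (EuclideanSpace ℝ (Fin D))).withDensity
      (fun x => ENNReal.ofReal (ρ₀ x)) := by
    have h1 : μ.map Xv = (μ.map fun ω => (Xv ω, Yv ω)).fst :=
      (Measure.fst_map_prodMk hYv).symm
    rw [h1, hlaw]
    ext s hs
    rw [Measure.fst_apply hs, withDensity_apply _ (measurable_fst hs),
      withDensity_apply _ hs]
    have hps : (Prod.fst ⁻¹' s : Set (EuclideanSpace ℝ (Fin D) × EuclideanSpace ℝ (Fin D)))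
        = s ×ˢ Set.univ := by
      ext p; simp
    rw [hps, Measure.volume_eq_prod _ _, ← Measure.prod_restrict s Set.univ, Measure.restrict_univ]
    rw [lintegral_prod _ hρπ_meas.aemeasurable]
    refine setLIntegral_congr_fun hs (fun x _ => ?_)
    have : ∀ y, ENNReal.ofReal (ρ₀ x * pτ x y)
        = ENNReal.ofReal (ρ₀ x) * ENNReal.ofReal (pτ x y) := fun y =>
      ENNReal.ofReal_mul (hρ₀_pos x).le
    simp_rw [this]
    rw [lintegral_const_mul _ (hpτx_meas x).ennreal_ofReal, hlint x, mul_one]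
  -- compProd identity
  have hcomp : μ.map (fun ω => (Xv ω, Yv ω)) = (μ.map Xv) ⊗ₘ Kτ := by
    rw [hlaw, hlawX]
    ext s hs
    rw [Measure.compProd_apply hs, withDensity_apply _ hs,
      lintegral_withDensity_eq_lintegral_mul _ hρ₀_meas.ennreal_ofReal
        (Kernel.measurable_kernel_prodMk_left hs),
      Measure.volume_eq_prod _ _,
      ← lintegral_indicator hs,
      lintegral_prod _ ((hρπ_meas.indicator hs).aemeasurable)]
    refine lintegral_congr fun x => ?_
    have hind : ∀ y, s.indicator (fun p => ENNReal.ofReal (ρ₀ p.1 * pτ p.1 p.2)) (x, y)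
        = (Prod.mk x ⁻¹' s).indicator (fun y => ENNReal.ofReal (ρ₀ x * pτ x y)) y := by
      intro y
      by_cases h : (x, y) ∈ s <;>
        simp [Set.indicator_apply, h, Set.mem_preimage]
    simp_rw [hind]
    rw [lintegral_indicator (measurable_prodMk_left hs)]
    simp only [Pi.mul_apply]
    rw [hKτ_apply x, withDensity_apply _ (measurable_prodMk_left hs)]
    simp_rw [ENNReal.ofReal_mul (hρ₀_pos x).le]
    rw [lintegral_const_mul _ (hpτx_meas x).ennreal_ofReal]
  have hKτ_eq : ∀ᵐ x ∂(μ.map Xv), Kτ x = condDistrib Yv Xv μ x :=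
    (condDistrib_ae_eq_of_measure_eq_compProd Xv hYv.aemeasurable hcomp).symm
  constructor
  · -- forward: equality of conditional expectations implies lumpability
    intro H
    set κR := condDistrib Yv (fun ω => r (Xv ω)) μ with hκRdef
    -- sectionwise equality of the two conditional distributions
    have hsect : ∀ t : Set (EuclideanSpace ℝ (Fin D)), MeasurableSet t →
        ∀ᵐ ω ∂μ, condDistrib Yv Xv μ (Xv ω) t = κR (r (Xv ω)) t := by
      intro t ht
      have h1 := condDistrib_ae_eq_condExp (μ := μ) hXv hYv ht
      have h2 := condDistrib_ae_eq_condExp (μ := μ) hrX hYv ht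
      have hindb : ∀ y, |Set.indicator t (fun _ => (1:ℝ)) y| ≤ 1 := by
        intro y; by_cases h : y ∈ t <;> simp [h]
      have h3 := H (t.indicator fun _ => 1) (measurable_const.indicator ht) ⟨1, hindb⟩
      have hco : (fun ω => (t.indicator fun _ => (1:ℝ)) (Yv ω))
          = (Yv ⁻¹' t).indicator fun _ => (1:ℝ) := by
        ext ω; by_cases h : Yv ω ∈ t <;> simp [h]
      rw [hco] at h3
      have h4 : (fun ω => (condDistrib Yv Xv μ (Xv ω) t).toReal)
          =ᵐ[μ] fun ω => (κR (r (Xv ω)) t).toReal := h1.trans (h3.trans h2.symm)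
      filter_upwards [h4] with ω hω
      exact (ENNReal.toReal_eq_toReal_iff' (measure_ne_top _ _) (measure_ne_top _ _)).mp hω
    -- the joint law disintegrates through r ∘ X
    have hMeq : μ.map (fun ω => (Xv ω, Yv ω)) = (μ.map Xv) ⊗ₘ (κR.comap r hr) := by
      haveI : IsProbabilityMeasure (μ.map (fun ω => (Xv ω, Yv ω))) :=
        Measure.isProbabilityMeasure_map hXY.aemeasurable
      haveI : IsProbabilityMeasure (μ.map Xv) := Measure.isProbabilityMeasure_map hXv.aemeasurable
      refine ext_of_generate_finite
        (Set.image2 (· ×ˢ ·) {s | MeasurableSet s} {t | MeasurableSet t})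
        generateFrom_prod.symm isPiSystem_prod ?_ (by simp [measure_univ])
      rintro _ ⟨s, hs, t, ht, rfl⟩
      simp only [Set.mem_setOf_eq] at hs ht
      rw [Measure.map_apply hXY (hs.prod ht), Set.mk_preimage_prod,
        Measure.compProd_apply (hs.prod ht)]
      have hsec : ∀ x, (κR.comap r hr) x (Prod.mk x ⁻¹' s ×ˢ t)
          = s.indicator (fun x => κR (r x) t) x := by
        intro x
        rw [Kernel.comap_apply, Set.mk_preimage_prod_right_eq_if]
        by_cases h : x ∈ s <;> simp [h]
      simp_rw [hsec]
      rw [lintegral_indicator hs,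
        setLIntegral_map hs (f := fun x => κR (r x) t)
          (by exact (Kernel.measurable_coe κR ht).comp hr) hXv,
        lintegral_congr_ae (ae_restrict_of_ae ((hsect t ht).mono fun ω hω => hω.symm)),
        setLIntegral_preimage_condDistrib hXv hYv.aemeasurable ht hs]
    have h5 := (condDistrib_ae_eq_of_measure_eq_compProd Xv hYv.aemeasurable hMeq).symm
    have h6 : ∀ᵐ x ∂(μ.map Xv), κR (r x)
        = (volume : Measure (EuclideanSpace ℝ (Fin D))).withDensity
          (fun y => ENNReal.ofReal (pτ x y)) := by
      filter_upwards [h5, hKτ_eq] with x hx hx2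
      rw [Kernel.comap_apply] at hx
      rw [hx, ← hx2, hKτ_apply]
    -- construct the reduced density via the kernel Radon-Nikodym derivative
    obtain ⟨mfin, hmfin_fin, hvol_ac, hfin_ac⟩ :=
      exists_isFiniteMeasure_absolutelyContinuous (volume : Measure (EuclideanSpace ℝ (Fin D)))
    haveI := hmfin_fin
    set w : EuclideanSpace ℝ (Fin D) → ℝ≥0∞ := mfin.rnDeriv volume with hwdef
    have hw_meas : Measurable w := Measure.measurable_rnDeriv _ _
    have hmfin_eq : (volume : Measure (EuclideanSpace ℝ (Fin D))).withDensity w = mfin :=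
      Measure.withDensity_rnDeriv_eq _ _ hfin_ac
    set η : Kernel (EuclideanSpace ℝ (Fin d)) (EuclideanSpace ℝ (Fin D)) :=
      Kernel.const _ mfin with hηdef
    set Dk := Kernel.rnDeriv κR η with hDkdef
    have hDk_meas : Measurable fun p : (EuclideanSpace ℝ (Fin d)) × (EuclideanSpace ℝ (Fin D))
        => Dk p.1 p.2 := Kernel.measurable_rnDeriv κR η
    refine ⟨fun z y => (w y * Dk z y).toReal, ?_, fun z y => ENNReal.toReal_nonneg, ?_⟩
    · have h : Function.uncurry (fun z y => (w y * Dk z y).toReal)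
          = fun p : (EuclideanSpace ℝ (Fin d)) × (EuclideanSpace ℝ (Fin D))
            => (w p.2 * Dk p.1 p.2).toReal := by ext ⟨z, y⟩; rfl
      rw [h]
      exact ((hw_meas.comp measurable_snd).mul hDk_meas).ennreal_toReal
    · -- the almost-everywhere identity
      have key : ∀ᵐ x ∂(μ.map Xv), ∀ᵐ y ∂(volume : Measure (EuclideanSpace ℝ (Fin D))),
          pτ x y = (w y * Dk (r x) y).toReal := by
        filter_upwards [h6] with x hx
        have hac : κR (r x) ≪ mfin := by
          rw [hx]; exact (withDensity_absolutelyContinuous _ _).trans hvol_ac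
        have h8 : Dk (r x) =ᵐ[mfin] (κR (r x)).rnDeriv mfin := by
          have h := Kernel.rnDeriv_eq_rnDeriv_measure (κ := κR) (η := η) (a := r x)
          simpa [hηdef, Kernel.const_apply] using h
        have h9 : (volume : Measure (EuclideanSpace ℝ (Fin D))).withDensity
            (w * fun y => Dk (r x) y) = κR (r x) := by
          rw [withDensity_mul _ hw_meas (Kernel.measurable_rnDeriv_right κR η (r x)), hmfin_eq,
            withDensity_congr_ae h8, Measure.withDensity_rnDeriv_eq _ _ hac]
        have h10 : (fun y => ENNReal.ofReal (pτ x y))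
            =ᵐ[(volume : Measure (EuclideanSpace ℝ (Fin D)))] (w * fun y => Dk (r x) y) := by
          refine (withDensity_eq_iff ((hpτx_meas x).ennreal_ofReal.aemeasurable)
            ((hw_meas.mul (Kernel.measurable_rnDeriv_right κR η (r x))).aemeasurable) ?_).mp ?_
          · rw [hlint x]; exact ENNReal.one_ne_top
          · show _ = (volume : Measure (EuclideanSpace ℝ (Fin D))).withDensity
                (w * fun y => Dk (r x) y)
            rw [h9, hx]
        filter_upwards [h10] with y hy
        have hyy : ENNReal.ofReal (pτ x y) = w y * Dk (r x) y := hy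
        rw [← ENNReal.toReal_ofReal (hpτ_nonneg x y), hyy]
      have key2 : ∀ᵐ x ∂(volume : Measure (EuclideanSpace ℝ (Fin D))),
          ∀ᵐ y ∂(volume : Measure (EuclideanSpace ℝ (Fin D))),
          pτ x y = (w y * Dk (r x) y).toReal := by
        rw [hlawX] at key
        have h := (ae_withDensity_iff hρ₀_meas.ennreal_ofReal).mp key
        filter_upwards [h] with x hx
        exact hx (ENNReal.ofReal_pos.mpr (hρ₀_pos x)).ne'
      refine (ae_withDensity_iff (hρ₀_meas.comp measurable_fst).ennreal_ofReal).mpr ?_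
      have hg_meas : Measurable fun p : (EuclideanSpace ℝ (Fin D)) × (EuclideanSpace ℝ (Fin D))
          => (w p.2 * Dk (r p.1) p.2).toReal :=
        ((hw_meas.comp measurable_snd).mul
          (hDk_meas.comp ((hr.comp measurable_fst).prodMk measurable_snd))).ennreal_toReal
      have hmeas_set : MeasurableSet {p : (EuclideanSpace ℝ (Fin D)) × (EuclideanSpace ℝ (Fin D))
          | ¬ pτ p.1 p.2 = (w p.2 * Dk (r p.1) p.2).toReal} :=
        (measurableSet_eq_fun hpτ_meas' hg_meas).compl
      have hnull : (volume : Measure (EuclideanSpace ℝ (Fin D) × EuclideanSpace ℝ (Fin D)))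
          {p | ¬ pτ p.1 p.2 = (w p.2 * Dk (r p.1) p.2).toReal} = 0 := by
        rw [Measure.volume_eq_prod _ _, Measure.measure_prod_null hmeas_set]
        filter_upwards [key2] with x hx
        have h : (Prod.mk x ⁻¹' {p : (EuclideanSpace ℝ (Fin D)) × (EuclideanSpace ℝ (Fin D))
            | ¬ pτ p.1 p.2 = (w p.2 * Dk (r p.1) p.2).toReal})
            = {y | ¬ pτ x y = (w y * Dk (r x) y).toReal} := rfl
        rw [h]
        exact hx
      have hae : ∀ᵐ p ∂(volume : Measure (EuclideanSpace ℝ (Fin D) × EuclideanSpace ℝ (Fin D))),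
          pτ p.1 p.2 = (w p.2 * Dk (r p.1) p.2).toReal := hnull
      exact hae.mono fun p hp _ => hp
  · -- backward: lumpability implies equality of conditional expectations
    rintro ⟨pτL, hpτL_meas, hpτL_nonneg, hlump⟩ f hf hfb
    obtain ⟨C, hC⟩ := hfb
    have hpτL_meas' : Measurable fun p : (EuclideanSpace ℝ (Fin d)) × (EuclideanSpace ℝ (Fin D)) =>
        pτL p.1 p.2 := by
      have h : (fun p : (EuclideanSpace ℝ (Fin d)) × (EuclideanSpace ℝ (Fin D)) => pτL p.1 p.2)
          = Function.uncurry pτL := by ext ⟨x, y⟩; rfl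
      rw [h]; exact hpτL_meas
    have hfY_int : Integrable (fun ω => f (Yv ω)) μ :=
      aux_integrable_of_bdd ((hf.comp hYv).aestronglyMeasurable) (fun ω => hC (Yv ω))
    have hm1 : MeasurableSpace.comap Xv inferInstance ≤ _ := hXv.comap_le
    have hm2le : MeasurableSpace.comap (fun ω => r (Xv ω)) inferInstance ≤ _ := hrX.comap_le
    have hm21 : MeasurableSpace.comap (fun ω => r (Xv ω)) inferInstance
        ≤ MeasurableSpace.comap Xv inferInstance := by
      rw [show (fun ω => r (Xv ω)) = r ∘ Xv from rfl, ← MeasurableSpace.comap_comp]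
      exact MeasurableSpace.comap_mono hr.comap_le
    have h1 : μ[(fun ω => f (Yv ω))|MeasurableSpace.comap Xv inferInstance]
        =ᵐ[μ] fun ω => ∫ y, f y ∂(condDistrib Yv Xv μ (Xv ω)) :=
      condExp_ae_eq_integral_condDistrib hXv hYv.aemeasurable hf.stronglyMeasurable hfY_int
    have hlump1 : ∀ᵐ p ∂(volume : Measure (EuclideanSpace ℝ (Fin D) × EuclideanSpace ℝ (Fin D))),
        pτ p.1 p.2 = pτL (r p.1) p.2 := by
      have h := (ae_withDensity_iff (hρ₀_meas.comp measurable_fst).ennreal_ofReal).mp hlump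
      filter_upwards [h] with p hp
      exact hp (ENNReal.ofReal_pos.mpr (hρ₀_pos p.1)).ne'
    have hlump2 : ∀ᵐ x ∂(volume : Measure (EuclideanSpace ℝ (Fin D))),
        ∀ᵐ y ∂(volume : Measure (EuclideanSpace ℝ (Fin D))), pτ x y = pτL (r x) y := by
      rw [Measure.volume_eq_prod _ _] at hlump1
      exact Measure.ae_ae_of_ae_prod hlump1
    have hlump3 : ∀ᵐ x ∂(μ.map Xv),
        ∀ᵐ y ∂(volume : Measure (EuclideanSpace ℝ (Fin D))), pτ x y = pτL (r x) y := by
      rw [hlawX]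
      exact hlump2.filter_mono (withDensity_absolutelyContinuous _ _).ae_le
    have hKω : ∀ᵐ ω ∂μ, Kτ (Xv ω) = condDistrib Yv Xv μ (Xv ω) :=
      ae_of_ae_map hXv.aemeasurable hKτ_eq
    have hlumpω : ∀ᵐ ω ∂μ,
        ∀ᵐ y ∂(volume : Measure (EuclideanSpace ℝ (Fin D))), pτ (Xv ω) y = pτL (r (Xv ω)) y :=
      ae_of_ae_map hXv.aemeasurable hlump3
    set G : EuclideanSpace ℝ (Fin d) → ℝ := fun z => ∫ y, f y * pτL z y with hGdef
    have hG_meas : Measurable G := by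
      have h : StronglyMeasurable fun p : (EuclideanSpace ℝ (Fin d)) × (EuclideanSpace ℝ (Fin D))
          => f p.2 * pτL p.1 p.2 :=
        ((hf.comp measurable_snd).mul hpτL_meas').stronglyMeasurable
      exact h.integral_prod_right'.measurable
    have key : (fun ω => ∫ y, f y ∂(condDistrib Yv Xv μ (Xv ω))) =ᵐ[μ] fun ω => G (r (Xv ω)) := by
      filter_upwards [hKω, hlumpω] with ω h2 h3
      rw [← h2, hKτ_apply (Xv ω)]
      have hco : (fun y => ENNReal.ofReal (pτ (Xv ω) y))
          = fun y => ((Real.toNNReal (pτ (Xv ω) y) : ℝ≥0) : ℝ≥0∞) := rfl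
      rw [hco, integral_withDensity_eq_integral_smul
        ((hpτx_meas (Xv ω)).real_toNNReal) f]
      refine integral_congr_ae ?_
      filter_upwards [h3] with y hy
      simp only [NNReal.smul_def, Real.coe_toNNReal _ (hpτ_nonneg _ y), smul_eq_mul]
      rw [hy, mul_comm]
    have hfinal1 : μ[(fun ω => f (Yv ω))|MeasurableSpace.comap Xv inferInstance]
        =ᵐ[μ] fun ω => G (r (Xv ω)) := h1.trans key
    have hint2 : Integrable (fun ω => G (r (Xv ω))) μ := (integrable_condExp).congr hfinal1
    have hsm2 : StronglyMeasurable[MeasurableSpace.comap (fun ω => r (Xv ω)) inferInstance]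
        (fun ω => G (r (Xv ω))) :=
      (hG_meas.comp (Measurable.of_comap_le le_rfl)).stronglyMeasurable
    refine hfinal1.trans (Filter.EventuallyEq.symm ?_)
    refine ((condExp_condExp_of_le hm21 hm1).symm.trans ?_)
    refine (condExp_congr_ae hfinal1).trans ?_
    rw [condExp_of_stronglyMeasurable hm2le hsm2 hint2]
end
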